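/- Let S be a 5×5 real matrix satisfying: S_{ij} = 0 if j = i or j = i+1 (indices taken mod 5, 1-indexed), S_{ij} > 0 for all other entries, and rank S = 3. Then there is no 5×5 complex matrix M with rank M = 3 such that S_{ij} = |M_{ij}|² for all i, j. -/

import Mathlib

open Matrix in
lemma pentagon_minor_zero {F : Type*} [Field F] (A : Matrix (Fin 5) (Fin 5) F) (h : A.rank = 3)
    (r c : Fin 4 → Fin 5) : (A.submatrix r c).det = 0 := by
  by_contra hd
  have hu : IsUnit (A.submatrix r c) :=
    (Matrix.isUnit_iff_isUnit_det _).2 (isUnit_iff_ne_zero.2 hd)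
  have h4 : (A.submatrix r c).rank = 4 := by
    simpa using Matrix.rank_of_isUnit _ hu
  have e1 : ((1 : Matrix (Fin 5) (Fin 5) F).submatrix r (Equiv.refl (Fin 5))) * A
      = A.submatrix r id := by
    simpa using Matrix.one_submatrix_mul r (Equiv.refl (Fin 5)) A
  have e2 : (A.submatrix r id) * ((1 : Matrix (Fin 5) (Fin 5) F).submatrix (Equiv.refl (Fin 5)) c)
      = A.submatrix r c := by
    simpa using Matrix.mul_submatrix_one (Equiv.refl (Fin 5)) c (A.submatrix r id)
  have le1 : (A.submatrix r id).rank ≤ A.rank := by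
    rw [← e1]; exact Matrix.rank_mul_le_right _ _
  have le2 : (A.submatrix r c).rank ≤ (A.submatrix r id).rank := by
    rw [← e2]; exact Matrix.rank_mul_le_left _ _
  omega

lemma pentagon_det_four {F : Type*} [CommRing F] (A : Matrix (Fin 4) (Fin 4) F) :
    A.det =
      A 0 0 * (A 1 1 * (A 2 2 * A 3 3 - A 2 3 * A 3 2) - A 1 2 * (A 2 1 * A 3 3 - A 2 3 * A 3 1)
        + A 1 3 * (A 2 1 * A 3 2 - A 2 2 * A 3 1))
      - A 0 1 * (A 1 0 * (A 2 2 * A 3 3 - A 2 3 * A 3 2) - A 1 2 * (A 2 0 * A 3 3 - A 2 3 * A 3 0)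
        + A 1 3 * (A 2 0 * A 3 2 - A 2 2 * A 3 0))
      + A 0 2 * (A 1 0 * (A 2 1 * A 3 3 - A 2 3 * A 3 1) - A 1 1 * (A 2 0 * A 3 3 - A 2 3 * A 3 0)
        + A 1 3 * (A 2 0 * A 3 1 - A 2 1 * A 3 0))
      - A 0 3 * (A 1 0 * (A 2 1 * A 3 2 - A 2 2 * A 3 1) - A 1 1 * (A 2 0 * A 3 2 - A 2 2 * A 3 0)
        + A 1 2 * (A 2 0 * A 3 1 - A 2 1 * A 3 0)) := by
  rw [Matrix.det_succ_row_zero]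
  simp [Fin.sum_univ_succ, Matrix.det_fin_three, Fin.succAbove,
    show Fin.succ (2 : Fin 3) = (3 : Fin 4) by decide,
    show Fin.castSucc (2 : Fin 3) = (2 : Fin 4) by decide]
  ring

lemma pentagon_key {z w : ℂ} {p q : ℝ} (hz : Complex.normSq z = p)
    (hw : Complex.normSq w = q) (hpq : p + q = 1) (hs : z + w = 1) :
    w.re = q ∧ w.im ^ 2 = p * q := by
  have hzw : z = 1 - w := by linear_combination hs
  rw [hzw, Complex.normSq_apply, Complex.sub_re, Complex.sub_im, Complex.one_re,
    Complex.one_im] at hz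
  rw [Complex.normSq_apply] at hw
  have hr : w.re = q := by linear_combination (hw - hz - hpq) / 2
  refine ⟨hr, ?_⟩
  linear_combination hw - (w.re + q) * hr - q * hpq

lemma pentagon_core
    (A B C D E F G H I J K L N O : ℂ) (a b c d e f g h i j k l n o : ℝ)
    (hA : Complex.normSq A = a) (hB : Complex.normSq B = b) (hC : Complex.normSq C = c)
    (hD : Complex.normSq D = d) (hE : Complex.normSq E = e) (hF : Complex.normSq F = f)
    (hG : Complex.normSq G = g) (hH : Complex.normSq H = h) (hI : Complex.normSq I = i)
    (hJ : Complex.normSq J = j) (hK : Complex.normSq K = k) (hL : Complex.normSq L = l)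
    (hN : Complex.normSq N = n) (hO : Complex.normSq O = o)
    (pa : 0 < a) (pb : 0 < b) (pc : 0 < c) (pd : 0 < d) (pe : 0 < e) (pf : 0 < f)
    (pg : 0 < g) (ph : 0 < h) (pi : 0 < i) (pj : 0 < j) (pk : 0 < k) (pl : 0 < l)
    (pn : 0 < n) (po : 0 < o)
    (hE0 : A*E*G*K = A*E*H*J + B*D*H*L)
    (hE1 : B*F*H*L = A*E*I*K + C*E*H*L)
    (hE3 : A*F*G*N = A*D*I*N + C*D*H*O)
    (sE0 : a*e*g*k = a*e*h*j + b*d*h*l)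
    (sE1 : b*f*h*l = a*e*i*k + c*e*h*l)
    (sE3 : a*f*g*n = a*d*i*n + c*d*h*o) : False := by
  have nA : A ≠ 0 := fun hh0 => by rw [hh0] at hA; simp at hA; linarith
  have nB : B ≠ 0 := fun hh0 => by rw [hh0] at hB; simp at hB; linarith
  have nC : C ≠ 0 := fun hh0 => by rw [hh0] at hC; simp at hC; linarith
  have nD : D ≠ 0 := fun hh0 => by rw [hh0] at hD; simp at hD; linarith
  have nE : E ≠ 0 := fun hh0 => by rw [hh0] at hE; simp at hE; linarith
  have nF : F ≠ 0 := fun hh0 => by rw [hh0] at hF; simp at hF; linarith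
  have nG : G ≠ 0 := fun hh0 => by rw [hh0] at hG; simp at hG; linarith
  have nH : H ≠ 0 := fun hh0 => by rw [hh0] at hH; simp at hH; linarith
  have nI : I ≠ 0 := fun hh0 => by rw [hh0] at hI; simp at hI; linarith
  have nK : K ≠ 0 := fun hh0 => by rw [hh0] at hK; simp at hK; linarith
  have nL : L ≠ 0 := fun hh0 => by rw [hh0] at hL; simp at hL; linarith
  have nN : N ≠ 0 := fun hh0 => by rw [hh0] at hN; simp at hN; linarith
  have na : a ≠ 0 := ne_of_gt pa
  have nb : b ≠ 0 := ne_of_gt pb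
  have nc : c ≠ 0 := ne_of_gt pc
  have nd : d ≠ 0 := ne_of_gt pd
  have ne' : e ≠ 0 := ne_of_gt pe
  have nf : f ≠ 0 := ne_of_gt pf
  have ng : g ≠ 0 := ne_of_gt pg
  have nh : h ≠ 0 := ne_of_gt ph
  have ni : i ≠ 0 := ne_of_gt pi
  have nk : k ≠ 0 := ne_of_gt pk
  have nl : l ≠ 0 := ne_of_gt pl
  have nn : n ≠ 0 := ne_of_gt pn
  -- relation 0
  have k0 := pentagon_key
    (z := (A*E*H*J)/(A*E*G*K)) (w := (B*D*H*L)/(A*E*G*K))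
    (p := (a*e*h*j)/(a*e*g*k)) (q := (b*d*h*l)/(a*e*g*k))
    (by rw [Complex.normSq_div]; simp only [Complex.normSq_mul, hA, hE, hH, hJ, hG, hK])
    (by rw [Complex.normSq_div]; simp only [Complex.normSq_mul, hA, hB, hD, hE, hH, hL, hG, hK])
    (by field_simp; linear_combination -sE0)
    (by field_simp; linear_combination -hE0)
  -- relation 1, roles swapped so that we learn about z1
  have k1 := pentagon_key
    (z := (C*E*H*L)/(B*F*H*L)) (w := (A*E*I*K)/(B*F*H*L))
    (p := (c*e*h*l)/(b*f*h*l)) (q := (a*e*i*k)/(b*f*h*l))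
    (by rw [Complex.normSq_div]; simp only [Complex.normSq_mul, hC, hE, hH, hL, hB, hF])
    (by rw [Complex.normSq_div]; simp only [Complex.normSq_mul, hA, hE, hI, hK, hB, hF, hH, hL])
    (by field_simp; linear_combination -sE1)
    (by field_simp; linear_combination -hE1)
  -- relation 3, roles swapped so that we learn about z3
  have k3 := pentagon_key
    (z := (C*D*H*O)/(A*F*G*N)) (w := (A*D*I*N)/(A*F*G*N))
    (p := (c*d*h*o)/(a*f*g*n)) (q := (a*d*i*n)/(a*f*g*n))
    (by rw [Complex.normSq_div]; simp only [Complex.normSq_mul, hC, hD, hH, hO, hA, hF, hG, hN])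
    (by rw [Complex.normSq_div]; simp only [Complex.normSq_mul, hA, hD, hI, hN, hF, hG])
    (by field_simp; linear_combination -sE3)
    (by field_simp; linear_combination -hE3)
  -- multiplicative identities
  have hprod : (A*D*I*N)/(A*F*G*N) = ((B*D*H*L)/(A*E*G*K)) * ((A*E*I*K)/(B*F*H*L)) := by
    rw [div_mul_div_comm, div_eq_div_iff
      (mul_ne_zero (mul_ne_zero (mul_ne_zero nA nF) nG) nN)
      (mul_ne_zero (mul_ne_zero (mul_ne_zero (mul_ne_zero nA nE) nG) nK)
        (mul_ne_zero (mul_ne_zero (mul_ne_zero nB nF) nH) nL))]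
    ring
  have hpprod : (a*d*i*n)/(a*f*g*n) = ((b*d*h*l)/(a*e*g*k)) * ((a*e*i*k)/(b*f*h*l)) := by
    rw [div_mul_div_comm, div_eq_div_iff
      (mul_ne_zero (mul_ne_zero (mul_ne_zero na nf) ng) nn)
      (mul_ne_zero (mul_ne_zero (mul_ne_zero (mul_ne_zero na ne') ng) nk)
        (mul_ne_zero (mul_ne_zero (mul_ne_zero nb nf) nh) nl))]
    ring
  have hre : ((A*D*I*N)/(A*F*G*N)).re
      = ((B*D*H*L)/(A*E*G*K)).re * ((A*E*I*K)/(B*F*H*L)).re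
        - ((B*D*H*L)/(A*E*G*K)).im * ((A*E*I*K)/(B*F*H*L)).im := by
    rw [hprod, Complex.mul_re]
  rw [k3.1, k0.1, k1.1] at hre
  have e2 : ((B*D*H*L)/(A*E*G*K)).im * ((A*E*I*K)/(B*F*H*L)).im = 0 := by
    linarith [hre, hpprod]
  have e3 : ((B*D*H*L)/(A*E*G*K)).im ^ 2 * ((A*E*I*K)/(B*F*H*L)).im ^ 2 = 0 := by
    calc ((B*D*H*L)/(A*E*G*K)).im ^ 2 * ((A*E*I*K)/(B*F*H*L)).im ^ 2
        = (((B*D*H*L)/(A*E*G*K)).im * ((A*E*I*K)/(B*F*H*L)).im) ^ 2 := by ring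
      _ = 0 := by rw [e2]; ring
  rw [k0.2, k1.2] at e3
  have hposf : 0 < (a*e*h*j)/(a*e*g*k) * ((b*d*h*l)/(a*e*g*k))
      * ((c*e*h*l)/(b*f*h*l) * ((a*e*i*k)/(b*f*h*l))) := by positivity
  linarith [hposf, e3]

/-- **Proposition 3.2**: pentagons are not complex psd-minimal. A scaled slack matrix
of a pentagon (cyclic 5-gon support pattern, positive elsewhere, rank 3) admits no
entrywise complex Hadamard square root of rank 3. -/
theorem stmt_6 (S : Matrix (Fin 5) (Fin 5) ℝ)
    (hzero : ∀ i j : Fin 5, (j = i ∨ j = i + 1) → S i j = 0)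
    (hpos : ∀ i j : Fin 5, ¬(j = i ∨ j = i + 1) → 0 < S i j)
    (hrank : S.rank = 3) :
    ¬ ∃ M : Matrix (Fin 5) (Fin 5) ℂ,
        M.rank = 3 ∧ ∀ i j : Fin 5, S i j = Complex.normSq (M i j) := by
  rintro ⟨M, hMrank, hsq⟩
  have mz : ∀ i j : Fin 5, (j = i ∨ j = i + 1) → M i j = 0 := fun i j hij =>
    Complex.normSq_eq_zero.mp (by rw [← hsq i j]; exact hzero i j hij)
  -- minor (0 1 2 3) × (0 1 2 3)
  have dS0 := pentagon_minor_zero S hrank ![0,1,2,3] ![0,1,2,3]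
  have dM0 := pentagon_minor_zero M hMrank ![0,1,2,3] ![0,1,2,3]
  rw [pentagon_det_four] at dS0 dM0
  simp only [Matrix.submatrix_apply, Matrix.cons_val_zero, Matrix.cons_val_one,
    Matrix.head_cons, Matrix.cons_val_two, Matrix.tail_cons, Matrix.cons_val_three] at dS0 dM0
  rw [hzero 0 0 (by decide), hzero 0 1 (by decide), hzero 1 1 (by decide),
    hzero 1 2 (by decide), hzero 2 2 (by decide), hzero 2 3 (by decide),
    hzero 3 3 (by decide)] at dS0
  rw [mz 0 0 (by decide), mz 0 1 (by decide), mz 1 1 (by decide),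
    mz 1 2 (by decide), mz 2 2 (by decide), mz 2 3 (by decide),
    mz 3 3 (by decide)] at dM0
  have sE0 : S 0 2*S 1 3*S 2 0*S 3 1 = S 0 2*S 1 3*S 2 1*S 3 0 + S 0 3*S 1 0*S 2 1*S 3 2 := by
    linear_combination dS0
  have hE0 : M 0 2*M 1 3*M 2 0*M 3 1 = M 0 2*M 1 3*M 2 1*M 3 0 + M 0 3*M 1 0*M 2 1*M 3 2 := by
    linear_combination dM0
  -- minor (0 1 2 3) × (1 2 3 4)
  have dS1 := pentagon_minor_zero S hrank ![0,1,2,3] ![1,2,3,4]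
  have dM1 := pentagon_minor_zero M hMrank ![0,1,2,3] ![1,2,3,4]
  rw [pentagon_det_four] at dS1 dM1
  simp only [Matrix.submatrix_apply, Matrix.cons_val_zero, Matrix.cons_val_one,
    Matrix.head_cons, Matrix.cons_val_two, Matrix.tail_cons, Matrix.cons_val_three] at dS1 dM1
  rw [hzero 0 1 (by decide), hzero 1 1 (by decide), hzero 1 2 (by decide),
    hzero 2 2 (by decide), hzero 2 3 (by decide), hzero 3 3 (by decide),
    hzero 3 4 (by decide)] at dS1
  rw [mz 0 1 (by decide), mz 1 1 (by decide), mz 1 2 (by decide),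
    mz 2 2 (by decide), mz 2 3 (by decide), mz 3 3 (by decide),
    mz 3 4 (by decide)] at dM1
  have sE1 : S 0 3*S 1 4*S 2 1*S 3 2 = S 0 2*S 1 3*S 2 4*S 3 1 + S 0 4*S 1 3*S 2 1*S 3 2 := by
    linear_combination dS1
  have hE1 : M 0 3*M 1 4*M 2 1*M 3 2 = M 0 2*M 1 3*M 2 4*M 3 1 + M 0 4*M 1 3*M 2 1*M 3 2 := by
    linear_combination dM1
  -- minor (0 1 2 4) × (0 1 2 4)
  have dS3 := pentagon_minor_zero S hrank ![0,1,2,4] ![0,1,2,4]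
  have dM3 := pentagon_minor_zero M hMrank ![0,1,2,4] ![0,1,2,4]
  rw [pentagon_det_four] at dS3 dM3
  simp only [Matrix.submatrix_apply, Matrix.cons_val_zero, Matrix.cons_val_one,
    Matrix.head_cons, Matrix.cons_val_two, Matrix.tail_cons, Matrix.cons_val_three] at dS3 dM3
  rw [hzero 0 0 (by decide), hzero 0 1 (by decide), hzero 1 1 (by decide),
    hzero 1 2 (by decide), hzero 2 2 (by decide), hzero 4 4 (by decide),
    hzero 4 0 (by decide)] at dS3
  rw [mz 0 0 (by decide), mz 0 1 (by decide), mz 1 1 (by decide),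
    mz 1 2 (by decide), mz 2 2 (by decide), mz 4 4 (by decide),
    mz 4 0 (by decide)] at dM3
  have sE3 : S 0 2*S 1 4*S 2 0*S 4 1 = S 0 2*S 1 0*S 2 4*S 4 1 + S 0 4*S 1 0*S 2 1*S 4 2 := by
    linear_combination dS3
  have hE3 : M 0 2*M 1 4*M 2 0*M 4 1 = M 0 2*M 1 0*M 2 4*M 4 1 + M 0 4*M 1 0*M 2 1*M 4 2 := by
    linear_combination dM3
  exact pentagon_core (M 0 2) (M 0 3) (M 0 4) (M 1 0) (M 1 3) (M 1 4) (M 2 0) (M 2 1)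
    (M 2 4) (M 3 0) (M 3 1) (M 3 2) (M 4 1) (M 4 2)
    (S 0 2) (S 0 3) (S 0 4) (S 1 0) (S 1 3) (S 1 4) (S 2 0) (S 2 1)
    (S 2 4) (S 3 0) (S 3 1) (S 3 2) (S 4 1) (S 4 2)
    (hsq 0 2).symm (hsq 0 3).symm (hsq 0 4).symm (hsq 1 0).symm (hsq 1 3).symm
    (hsq 1 4).symm (hsq 2 0).symm (hsq 2 1).symm (hsq 2 4).symm (hsq 3 0).symm
    (hsq 3 1).symm (hsq 3 2).symm (hsq 4 1).symm (hsq 4 2).symm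
    (hpos 0 2 (by decide)) (hpos 0 3 (by decide)) (hpos 0 4 (by decide))
    (hpos 1 0 (by decide)) (hpos 1 3 (by decide)) (hpos 1 4 (by decide))
    (hpos 2 0 (by decide)) (hpos 2 1 (by decide)) (hpos 2 4 (by decide))
    (hpos 3 0 (by decide)) (hpos 3 1 (by decide)) (hpos 3 2 (by decide))
    (hpos 4 1 (by decide)) (hpos 4 2 (by decide))
    hE0 hE1 hE3 sE0 sE1 sE3
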